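/- Assume ω ∈ K satisfies ω² + ω + 1 = 0. Let P = (x,y) and Q = (u,v) be points on the Hessian curve E with x, y, u, v all nonzero. Then f₁₈(u,v) = f₁₈(x,y) if and only if (u,v) belongs to the 18-element set S = { (x,y), (x/y, 1/y), (y,x), (y/x, 1/x), (1/y, x/y), (1/x, y/x) } ∪ { (ω·s, ω²·t) : (s,t) in the previous six pairs } ∪ { (ω²·s, ω·t) : (s,t) in the first six pairs }. In particular, f₁₈ is a compression function of degree 18 on E. -/

import Mathlib

/-- The degree-18 compression function on the Hessian curve. -/
def hessF18 {K : Type*} [Field K] (x y : K) : K :=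
  (x ^ 3 * y ^ 3 + x ^ 3 + y ^ 3) / (x ^ 2 * y ^ 2)

lemma hessF18_comm {K : Type*} [Field K] (a b : K) : hessF18 a b = hessF18 b a := by
  unfold hessF18; congr 1 <;> ring

lemma hessF18_inv {K : Type*} [Field K] (a b : K) (hb : b ≠ 0) :
    hessF18 (a / b) (1 / b) = hessF18 a b := by
  have hb6 : b ^ 6 ≠ 0 := pow_ne_zero _ hb
  have h1 : (a / b) ^ 3 * (1 / b) ^ 3 + (a / b) ^ 3 + (1 / b) ^ 3
      = (a ^ 3 * b ^ 3 + a ^ 3 + b ^ 3) / b ^ 6 := by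
    rw [eq_div_iff hb6]
    field_simp
    ring
  have h2 : (a / b) ^ 2 * (1 / b) ^ 2 = (a ^ 2 * b ^ 2) / b ^ 6 := by
    rw [eq_div_iff hb6]
    field_simp
  unfold hessF18
  rw [h1, h2, div_div_div_cancel_right₀ hb6]

lemma hessF18_twist1 {K : Type*} [Field K] (ω a b : K) (h3 : ω ^ 3 = 1) :
    hessF18 (ω * a) (ω ^ 2 * b) = hessF18 a b := by
  unfold hessF18; congr 1
  · linear_combination (a ^ 3 * b ^ 3 * (ω ^ 6 + ω ^ 3 + 1) + a ^ 3 + (ω ^ 3 + 1) * b ^ 3) * h3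
  · linear_combination ((ω ^ 3 + 1) * a ^ 2 * b ^ 2) * h3

lemma hessF18_twist2 {K : Type*} [Field K] (ω a b : K) (h3 : ω ^ 3 = 1) :
    hessF18 (ω ^ 2 * a) (ω * b) = hessF18 a b := by
  unfold hessF18; congr 1
  · linear_combination (a ^ 3 * b ^ 3 * (ω ^ 6 + ω ^ 3 + 1) + (ω ^ 3 + 1) * a ^ 3 + b ^ 3) * h3
  · linear_combination ((ω ^ 3 + 1) * a ^ 2 * b ^ 2) * h3

lemma cube_split {K : Type*} [Field K] (ω a b : K) (hω : ω ^ 2 + ω + 1 = 0)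
    (h : a ^ 3 = b ^ 3) : a = b ∨ a = ω * b ∨ a = ω ^ 2 * b := by
  have h0 : (a - b) * ((a - ω * b) * (a - ω ^ 2 * b)) = 0 := by
    linear_combination h + (-(a ^ 2 * b) + ω * a * b ^ 2 - (ω - 1) * b ^ 3) * hω
  rcases mul_eq_zero.mp h0 with h1 | h1
  · exact Or.inl (sub_eq_zero.mp h1)
  rcases mul_eq_zero.mp h1 with h2 | h2
  · exact Or.inr (Or.inl (sub_eq_zero.mp h2))
  · exact Or.inr (Or.inr (sub_eq_zero.mp h2))

/-- The compression function
`f₁₈(x,y) = (x³y³ + x³ + y³)/(x²y²)` on the Hessian curve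
`x³ + y³ + 1 = d·x·y` has degree 18: two points (with nonzero coordinates)
compress to the same value iff they belong to the 18-element orbit. -/
theorem hessian_deg18_compression_fibre {K : Type*} [Field K] (d ω : K)
    (hchar2 : (2 : K) ≠ 0) (hchar3 : (3 : K) ≠ 0)
    (hd : d ^ 3 ≠ 27)
    (hω : ω ^ 2 + ω + 1 = 0)
    (x y u v : K)
    (hx : x ≠ 0) (hy : y ≠ 0) (hu : u ≠ 0) (hv : v ≠ 0)
    (hP : x ^ 3 + y ^ 3 + 1 = d * x * y)
    (hQ : u ^ 3 + v ^ 3 + 1 = d * u * v) :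
    hessF18 u v = hessF18 x y ↔
      ((u, v) = (x, y) ∨ (u, v) = (x / y, 1 / y) ∨ (u, v) = (y, x) ∨
        (u, v) = (y / x, 1 / x) ∨ (u, v) = (1 / y, x / y) ∨ (u, v) = (1 / x, y / x) ∨
        (u, v) = (ω * x, ω ^ 2 * y) ∨ (u, v) = (ω * (x / y), ω ^ 2 * (1 / y)) ∨
        (u, v) = (ω * y, ω ^ 2 * x) ∨ (u, v) = (ω * (y / x), ω ^ 2 * (1 / x)) ∨
        (u, v) = (ω * (1 / y), ω ^ 2 * (x / y)) ∨ (u, v) = (ω * (1 / x), ω ^ 2 * (y / x)) ∨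
        (u, v) = (ω ^ 2 * x, ω * y) ∨ (u, v) = (ω ^ 2 * (x / y), ω * (1 / y)) ∨
        (u, v) = (ω ^ 2 * y, ω * x) ∨ (u, v) = (ω ^ 2 * (y / x), ω * (1 / x)) ∨
        (u, v) = (ω ^ 2 * (1 / y), ω * (x / y)) ∨ (u, v) = (ω ^ 2 * (1 / x), ω * (y / x))) := by
  have hω3 : ω ^ 3 = 1 := by linear_combination (ω - 1) * hω
  have hωne : ω ≠ 0 := by
    intro h0
    rw [h0] at hω
    simp at hω
  have hω2ne : ω ^ 2 ≠ 0 := pow_ne_zero 2 hωne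
  constructor
  · -- forward direction
    intro h
    unfold hessF18 at h
    have h' : (u ^ 3 * v ^ 3 + u ^ 3 + v ^ 3) * (x ^ 2 * y ^ 2)
        = (x ^ 3 * y ^ 3 + x ^ 3 + y ^ 3) * (u ^ 2 * v ^ 2) :=
      (div_eq_div_iff (by simp [hu, hv]) (by simp [hx, hy])).mp h
    have E1 : (u * v - x * y) * ((u * v * y ^ 2 - x) * (u * v * x ^ 2 - y)) = 0 := by
      linear_combination h' + (u * v * x * y) * hP - (x ^ 2 * y ^ 2) * hQ
    rcases mul_eq_zero.mp E1 with hA | hBC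
    · -- u*v = x*y
      have huv : u * v = x * y := sub_eq_zero.mp hA
      have hq : (u ^ 3 - x ^ 3) * (u ^ 3 - y ^ 3) = 0 := by
        linear_combination u ^ 3 * hQ - u ^ 3 * hP +
          (d * u ^ 3 - (u ^ 2 * v ^ 2 + u * v * (x * y) + x ^ 2 * y ^ 2)) * huv
      rcases mul_eq_zero.mp hq with h1 | h1
      · have hu3 : u ^ 3 = x ^ 3 := sub_eq_zero.mp h1
        rcases cube_split ω u x hω hu3 with hc | hc | hc
        · have h0 : x * v = x * y := by linear_combination huv - v * hc
          have hfin : (u, v) = (x, y) := by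
            rw [Prod.mk.injEq]; exact ⟨hc, mul_left_cancel₀ hx h0⟩
          exact Or.inl hfin
        · have h0 : (ω * x) * v = (ω * x) * (ω ^ 2 * y) := by
            linear_combination huv - v * hc - x * y * hω3
          have hfin : (u, v) = (ω * x, ω ^ 2 * y) := by
            rw [Prod.mk.injEq]; exact ⟨hc, mul_left_cancel₀ (mul_ne_zero hωne hx) h0⟩
          exact Or.inr <| Or.inr <| Or.inr <| Or.inr <| Or.inr <| Or.inr <| Or.inl hfin
        · have h0 : (ω ^ 2 * x) * v = (ω ^ 2 * x) * (ω * y) := by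
            linear_combination huv - v * hc - x * y * hω3
          have hfin : (u, v) = (ω ^ 2 * x, ω * y) := by
            rw [Prod.mk.injEq]; exact ⟨hc, mul_left_cancel₀ (mul_ne_zero hω2ne hx) h0⟩
          exact Or.inr <| Or.inr <| Or.inr <| Or.inr <| Or.inr <| Or.inr <| Or.inr <| Or.inr <| Or.inr <| Or.inr <| Or.inr <| Or.inr <| Or.inl hfin
      · have hu3 : u ^ 3 = y ^ 3 := sub_eq_zero.mp h1
        rcases cube_split ω u y hω hu3 with hc | hc | hc
        · have h0 : y * v = y * x := by linear_combination huv - v * hc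
          have hfin : (u, v) = (y, x) := by
            rw [Prod.mk.injEq]; exact ⟨hc, mul_left_cancel₀ hy h0⟩
          exact Or.inr <| Or.inr <| Or.inl hfin
        · have h0 : (ω * y) * v = (ω * y) * (ω ^ 2 * x) := by
            linear_combination huv - v * hc - x * y * hω3
          have hfin : (u, v) = (ω * y, ω ^ 2 * x) := by
            rw [Prod.mk.injEq]; exact ⟨hc, mul_left_cancel₀ (mul_ne_zero hωne hy) h0⟩
          exact Or.inr <| Or.inr <| Or.inr <| Or.inr <| Or.inr <| Or.inr <| Or.inr <| Or.inr <| Or.inl hfin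
        · have h0 : (ω ^ 2 * y) * v = (ω ^ 2 * y) * (ω * x) := by
            linear_combination huv - v * hc - x * y * hω3
          have hfin : (u, v) = (ω ^ 2 * y, ω * x) := by
            rw [Prod.mk.injEq]; exact ⟨hc, mul_left_cancel₀ (mul_ne_zero hω2ne hy) h0⟩
          exact Or.inr <| Or.inr <| Or.inr <| Or.inr <| Or.inr <| Or.inr <| Or.inr <| Or.inr <| Or.inr <| Or.inr <| Or.inr <| Or.inr <| Or.inr <| Or.inr <| Or.inl hfin
    rcases mul_eq_zero.mp hBC with hB | hC
    · -- u*v*y² = x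
      have h2' : u * v * y ^ 2 = x := sub_eq_zero.mp hB
      have hq2 : (u ^ 3 * y ^ 3 - x ^ 3) * (u ^ 3 * y ^ 3 - 1) = 0 := by
        linear_combination (u ^ 3 * y ^ 6) * hQ +
          (d * u ^ 3 * y ^ 4 - (u ^ 2 * v ^ 2 * y ^ 4 + u * v * x * y ^ 2 + x ^ 2)) * h2' -
          (u ^ 3 * y ^ 3) * hP
      rcases mul_eq_zero.mp hq2 with h1 | h1
      · have hc3 : (u * y) ^ 3 = x ^ 3 := by linear_combination sub_eq_zero.mp h1
        rcases cube_split ω (u * y) x hω hc3 with hc | hc | hc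
        · have hu' : u = x / y := by rw [eq_div_iff hy]; exact hc
          have h0 : x * (v * y) = x * 1 := by linear_combination h2' - (v * y) * hc
          have hv' : v = 1 / y := by
            rw [eq_div_iff hy]; exact mul_left_cancel₀ hx h0
          have hfin : (u, v) = (x / y, 1 / y) := by rw [Prod.mk.injEq]; exact ⟨hu', hv'⟩
          exact Or.inr <| Or.inl hfin
        · have hu' : u = ω * (x / y) := by rw [← mul_div_assoc, eq_div_iff hy]; exact hc
          have h0 : (ω * x) * (v * y) = (ω * x) * ω ^ 2 := by
            linear_combination h2' - (v * y) * hc - x * hω3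
          have hv' : v = ω ^ 2 * (1 / y) := by
            rw [mul_one_div, eq_div_iff hy]
            exact mul_left_cancel₀ (mul_ne_zero hωne hx) h0
          have hfin : (u, v) = (ω * (x / y), ω ^ 2 * (1 / y)) := by
            rw [Prod.mk.injEq]; exact ⟨hu', hv'⟩
          exact Or.inr <| Or.inr <| Or.inr <| Or.inr <| Or.inr <| Or.inr <| Or.inr <| Or.inl hfin
        · have hu' : u = ω ^ 2 * (x / y) := by rw [← mul_div_assoc, eq_div_iff hy]; exact hc
          have h0 : (ω ^ 2 * x) * (v * y) = (ω ^ 2 * x) * ω := by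
            linear_combination h2' - (v * y) * hc - x * hω3
          have hv' : v = ω * (1 / y) := by
            rw [mul_one_div, eq_div_iff hy]
            exact mul_left_cancel₀ (mul_ne_zero hω2ne hx) h0
          have hfin : (u, v) = (ω ^ 2 * (x / y), ω * (1 / y)) := by
            rw [Prod.mk.injEq]; exact ⟨hu', hv'⟩
          exact Or.inr <| Or.inr <| Or.inr <| Or.inr <| Or.inr <| Or.inr <| Or.inr <| Or.inr <| Or.inr <| Or.inr <| Or.inr <| Or.inr <| Or.inr <| Or.inl hfin
      · have hc3 : (u * y) ^ 3 = 1 ^ 3 := by linear_combination sub_eq_zero.mp h1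
        rcases cube_split ω (u * y) 1 hω hc3 with hc | hc | hc
        · have hu' : u = 1 / y := by rw [eq_div_iff hy]; exact hc
          have h0 : v * y = x := by linear_combination h2' - (v * y) * hc
          have hv' : v = x / y := by rw [eq_div_iff hy]; exact h0
          have hfin : (u, v) = (1 / y, x / y) := by rw [Prod.mk.injEq]; exact ⟨hu', hv'⟩
          exact Or.inr <| Or.inr <| Or.inr <| Or.inr <| Or.inl hfin
        · rw [mul_one] at hc
          have hu' : u = ω * (1 / y) := by
            rw [mul_one_div, eq_div_iff hy]; exact hc
          have h0 : ω * (v * y) = ω * (ω ^ 2 * x) := by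
            linear_combination h2' - (v * y) * hc - x * hω3
          have hv' : v = ω ^ 2 * (x / y) := by
            rw [← mul_div_assoc, eq_div_iff hy]
            exact mul_left_cancel₀ hωne h0
          have hfin : (u, v) = (ω * (1 / y), ω ^ 2 * (x / y)) := by
            rw [Prod.mk.injEq]; exact ⟨hu', hv'⟩
          exact Or.inr <| Or.inr <| Or.inr <| Or.inr <| Or.inr <| Or.inr <| Or.inr <| Or.inr <| Or.inr <| Or.inr <| Or.inl hfin
        · rw [mul_one] at hc
          have hu' : u = ω ^ 2 * (1 / y) := by
            rw [mul_one_div, eq_div_iff hy]; exact hc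
          have h0 : ω ^ 2 * (v * y) = ω ^ 2 * (ω * x) := by
            linear_combination h2' - (v * y) * hc - x * hω3
          have hv' : v = ω * (x / y) := by
            rw [← mul_div_assoc, eq_div_iff hy]
            exact mul_left_cancel₀ hω2ne h0
          have hfin : (u, v) = (ω ^ 2 * (1 / y), ω * (x / y)) := by
            rw [Prod.mk.injEq]; exact ⟨hu', hv'⟩
          exact Or.inr <| Or.inr <| Or.inr <| Or.inr <| Or.inr <| Or.inr <| Or.inr <| Or.inr <| Or.inr <| Or.inr <| Or.inr <| Or.inr <| Or.inr <| Or.inr <| Or.inr <| Or.inr <| Or.inl hfin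
    · -- u*v*x² = y
      have h3' : u * v * x ^ 2 = y := sub_eq_zero.mp hC
      have hq3 : (u ^ 3 * x ^ 3 - y ^ 3) * (u ^ 3 * x ^ 3 - 1) = 0 := by
        linear_combination (u ^ 3 * x ^ 6) * hQ +
          (d * u ^ 3 * x ^ 4 - (u ^ 2 * v ^ 2 * x ^ 4 + u * v * y * x ^ 2 + y ^ 2)) * h3' -
          (u ^ 3 * x ^ 3) * hP
      rcases mul_eq_zero.mp hq3 with h1 | h1
      · have hc3 : (u * x) ^ 3 = y ^ 3 := by linear_combination sub_eq_zero.mp h1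
        rcases cube_split ω (u * x) y hω hc3 with hc | hc | hc
        · have hu' : u = y / x := by rw [eq_div_iff hx]; exact hc
          have h0 : y * (v * x) = y * 1 := by linear_combination h3' - (v * x) * hc
          have hv' : v = 1 / x := by
            rw [eq_div_iff hx]; exact mul_left_cancel₀ hy h0
          have hfin : (u, v) = (y / x, 1 / x) := by rw [Prod.mk.injEq]; exact ⟨hu', hv'⟩
          exact Or.inr <| Or.inr <| Or.inr <| Or.inl hfin
        · have hu' : u = ω * (y / x) := by rw [← mul_div_assoc, eq_div_iff hx]; exact hc
          have h0 : (ω * y) * (v * x) = (ω * y) * ω ^ 2 := by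
            linear_combination h3' - (v * x) * hc - y * hω3
          have hv' : v = ω ^ 2 * (1 / x) := by
            rw [mul_one_div, eq_div_iff hx]
            exact mul_left_cancel₀ (mul_ne_zero hωne hy) h0
          have hfin : (u, v) = (ω * (y / x), ω ^ 2 * (1 / x)) := by
            rw [Prod.mk.injEq]; exact ⟨hu', hv'⟩
          exact Or.inr <| Or.inr <| Or.inr <| Or.inr <| Or.inr <| Or.inr <| Or.inr <| Or.inr <| Or.inr <| Or.inl hfin
        · have hu' : u = ω ^ 2 * (y / x) := by rw [← mul_div_assoc, eq_div_iff hx]; exact hc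
          have h0 : (ω ^ 2 * y) * (v * x) = (ω ^ 2 * y) * ω := by
            linear_combination h3' - (v * x) * hc - y * hω3
          have hv' : v = ω * (1 / x) := by
            rw [mul_one_div, eq_div_iff hx]
            exact mul_left_cancel₀ (mul_ne_zero hω2ne hy) h0
          have hfin : (u, v) = (ω ^ 2 * (y / x), ω * (1 / x)) := by
            rw [Prod.mk.injEq]; exact ⟨hu', hv'⟩
          exact Or.inr <| Or.inr <| Or.inr <| Or.inr <| Or.inr <| Or.inr <| Or.inr <| Or.inr <| Or.inr <| Or.inr <| Or.inr <| Or.inr <| Or.inr <| Or.inr <| Or.inr <| Or.inl hfin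
      · have hc3 : (u * x) ^ 3 = 1 ^ 3 := by linear_combination sub_eq_zero.mp h1
        rcases cube_split ω (u * x) 1 hω hc3 with hc | hc | hc
        · have hu' : u = 1 / x := by rw [eq_div_iff hx]; exact hc
          have h0 : v * x = y := by linear_combination h3' - (v * x) * hc
          have hv' : v = y / x := by rw [eq_div_iff hx]; exact h0
          have hfin : (u, v) = (1 / x, y / x) := by rw [Prod.mk.injEq]; exact ⟨hu', hv'⟩
          exact Or.inr <| Or.inr <| Or.inr <| Or.inr <| Or.inr <| Or.inl hfin
        · rw [mul_one] at hc
          have hu' : u = ω * (1 / x) := by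
            rw [mul_one_div, eq_div_iff hx]; exact hc
          have h0 : ω * (v * x) = ω * (ω ^ 2 * y) := by
            linear_combination h3' - (v * x) * hc - y * hω3
          have hv' : v = ω ^ 2 * (y / x) := by
            rw [← mul_div_assoc, eq_div_iff hx]
            exact mul_left_cancel₀ hωne h0
          have hfin : (u, v) = (ω * (1 / x), ω ^ 2 * (y / x)) := by
            rw [Prod.mk.injEq]; exact ⟨hu', hv'⟩
          exact Or.inr <| Or.inr <| Or.inr <| Or.inr <| Or.inr <| Or.inr <| Or.inr <| Or.inr <| Or.inr <| Or.inr <| Or.inr <| Or.inl hfin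
        · rw [mul_one] at hc
          have hu' : u = ω ^ 2 * (1 / x) := by
            rw [mul_one_div, eq_div_iff hx]; exact hc
          have h0 : ω ^ 2 * (v * x) = ω ^ 2 * (ω * y) := by
            linear_combination h3' - (v * x) * hc - y * hω3
          have hv' : v = ω * (y / x) := by
            rw [← mul_div_assoc, eq_div_iff hx]
            exact mul_left_cancel₀ hω2ne h0
          have hfin : (u, v) = (ω ^ 2 * (1 / x), ω * (y / x)) := by
            rw [Prod.mk.injEq]; exact ⟨hu', hv'⟩
          exact Or.inr <| Or.inr <| Or.inr <| Or.inr <| Or.inr <| Or.inr <| Or.inr <| Or.inr <| Or.inr <| Or.inr <| Or.inr <| Or.inr <| Or.inr <| Or.inr <| Or.inr <| Or.inr <| Or.inr <| hfin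
  · -- backward direction
    rintro (h | h | h | h | h | h | h | h | h | h | h | h | h | h | h | h | h | h) <;>
        rw [Prod.mk.injEq] at h <;> rw [h.1, h.2]
    · exact hessF18_inv x y hy
    · exact hessF18_comm y x
    · exact (hessF18_inv y x hx).trans (hessF18_comm y x)
    · exact (hessF18_comm _ _).trans (hessF18_inv x y hy)
    · exact (hessF18_comm _ _).trans ((hessF18_inv y x hx).trans (hessF18_comm y x))
    · exact (hessF18_twist1 ω x y hω3).trans rfl
    · exact (hessF18_twist1 ω (x / y) (1 / y) hω3).trans (hessF18_inv x y hy)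
    · exact (hessF18_twist1 ω y x hω3).trans (hessF18_comm y x)
    · exact (hessF18_twist1 ω (y / x) (1 / x) hω3).trans
        ((hessF18_inv y x hx).trans (hessF18_comm y x))
    · exact (hessF18_twist1 ω (1 / y) (x / y) hω3).trans
        ((hessF18_comm _ _).trans (hessF18_inv x y hy))
    · exact (hessF18_twist1 ω (1 / x) (y / x) hω3).trans
        ((hessF18_comm _ _).trans ((hessF18_inv y x hx).trans (hessF18_comm y x)))
    · exact (hessF18_twist2 ω x y hω3).trans rfl
    · exact (hessF18_twist2 ω (x / y) (1 / y) hω3).trans (hessF18_inv x y hy)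
    · exact (hessF18_twist2 ω y x hω3).trans (hessF18_comm y x)
    · exact (hessF18_twist2 ω (y / x) (1 / x) hω3).trans
        ((hessF18_inv y x hx).trans (hessF18_comm y x))
    · exact (hessF18_twist2 ω (1 / y) (x / y) hω3).trans
        ((hessF18_comm _ _).trans (hessF18_inv x y hy))
    · exact (hessF18_twist2 ω (1 / x) (y / x) hω3).trans
        ((hessF18_comm _ _).trans ((hessF18_inv y x hx).trans (hessF18_comm y x)))
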